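/- Let Y be a DPP with kernel K. For k ∈ {1,…,N}, if ℙ(Y ∩ {1,…,k−1} = ∅) > 0, then the maximum of ℙ(Y_k = 1 | Y_{1:k−1} = y_{1:k−1}) over all admissible histories y_{1:k−1} (i.e. with ℙ(Y_{1:k−1} = y_{1:k−1}) > 0) is attained at y_{1:k−1} = 0 and equals K(k,k) + K_{{k}×{1:k−1}} ((I−K)_{{1:k−1}})^{-1} K_{{1:k−1}×{k}}. -/

import Mathlib

open Matrix Finset

/-- The principal submatrix of `K` indexed by a finite subset `A`. -/
noncomputable def subMat {N : ℕ} (K : Matrix (Fin N) (Fin N) ℝ) (A : Finset (Fin N)) :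
    Matrix A A ℝ :=
  K.submatrix (fun i : A => (i : Fin N)) (fun j : A => (j : Fin N))

lemma det_pad {N : ℕ} (K : Matrix (Fin N) (Fin N) ℝ) {ι : Type*} [Fintype ι] [DecidableEq ι]
    (e : ι → Fin N) (he : Function.Injective e) (D : Finset ι) :
    (Matrix.of fun i j => if i ∈ D then K (e i) (e j) else if i = j then (1:ℝ) else 0).det
      = (subMat K (D.image e)).det := by
  classical
  -- reindex by sumCompl
  set M := (Matrix.of fun i j => if i ∈ D then K (e i) (e j) else if i = j then (1:ℝ) else 0)
  have h1 : M.det = (M.submatrix (Equiv.sumCompl (fun i => i ∈ D))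
      (Equiv.sumCompl (fun i => i ∈ D))).det := (Matrix.det_submatrix_equiv_self _ _).symm
  have h2 : M.submatrix (Equiv.sumCompl (fun i => i ∈ D)) (Equiv.sumCompl (fun i => i ∈ D)) =
      Matrix.fromBlocks (Matrix.of fun (a b : {i : ι // i ∈ D}) => K (e a) (e b))
        (Matrix.of fun (a : {i : ι // i ∈ D}) (b : {i : ι // i ∉ D}) => K (e a) (e b)) 0 1 := by
    ext x y
    cases x with
    | inl a => cases y with
      | inl b => simp [M, a.2, b.2]
      | inr b => simp [M, a.2]
    | inr a => cases y with
      | inl b =>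
        simp only [Matrix.submatrix_apply, Equiv.sumCompl_apply_inr, Equiv.sumCompl_apply_inl,
          Matrix.fromBlocks_apply₂₁, Matrix.zero_apply, M, Matrix.of_apply]
        have : (a : ι) ≠ (b : ι) := fun h => a.2 (h ▸ b.2)
        simp [a.2, this]
      | inr b =>
        simp only [Matrix.submatrix_apply, Equiv.sumCompl_apply_inr,
          Matrix.fromBlocks_apply₂₂, M, Matrix.of_apply]
        rcases eq_or_ne a b with h | h
        · subst h; simp [a.2, Matrix.one_apply]
        · have : (a : ι) ≠ (b : ι) := fun hh => h (Subtype.ext hh)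
          simp [a.2, this, Matrix.one_apply, h]
  have h3 : ∀ a : {i : ι // i ∈ D}, e a ∈ D.image e := fun a => Finset.mem_image_of_mem e a.2
  let ψ : {i : ι // i ∈ D} → (D.image e : Finset (Fin N)) := fun a => ⟨e a, h3 a⟩
  have hψ : Function.Bijective ψ := by
    constructor
    · intro a b hab
      exact Subtype.ext (he (congrArg Subtype.val hab))
    · rintro ⟨x, hx⟩
      rcases Finset.mem_image.1 hx with ⟨i, hi, rfl⟩
      exact ⟨⟨i, hi⟩, rfl⟩
  have h4 : (Matrix.of fun (a b : {i : ι // i ∈ D}) => K (e a) (e b)) =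
      (subMat K (D.image e)).submatrix (Equiv.ofBijective ψ hψ) (Equiv.ofBijective ψ hψ) := by
    ext a b; rfl
  rw [h1, h2, Matrix.det_fromBlocks_zero₂₁, h4, Matrix.det_submatrix_equiv_self, Matrix.det_one,
    mul_one]

lemma det_expand {N : ℕ} (K : Matrix (Fin N) (Fin N) ℝ) {ι : Type*} [Fintype ι] [DecidableEq ι]
    (e : ι → Fin N) (he : Function.Injective e) (E : Finset ι) :
    (Matrix.of fun i j => if i ∈ E then ((if i = j then (1:ℝ) else 0) - K (e i) (e j))
        else K (e i) (e j)).det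
      = ∑ B ∈ E.powerset, (-1:ℝ)^B.card * (subMat K ((Eᶜ ∪ B).image e)).det := by
  classical
  set f := (Matrix.detRowAlternating : (ι → ℝ) [⋀^ι]→ₗ[ℝ] ℝ).toMultilinearMap with hf
  set Krow : ι → ι → ℝ := fun i j => K (e i) (e j) with hKrow
  set erow : ι → ι → ℝ := fun i j => if i = j then (1:ℝ) else 0 with herow
  set W₂ : ι → ι → ℝ := E.piecewise (-erow + Krow) Krow with hW₂
  -- Step A : LHS = (-1)^E.card * f W₂
  have stepA : (Matrix.of fun i j => if i ∈ E then ((if i = j then (1:ℝ) else 0) - K (e i) (e j))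
      else K (e i) (e j)).det = (-1:ℝ)^E.card * f W₂ := by
    have h1 : (Matrix.of fun i j => if i ∈ E then ((if i = j then (1:ℝ) else 0) - K (e i) (e j))
        else K (e i) (e j)) = E.piecewise (fun i => (-1:ℝ) • W₂ i) W₂ := by
      funext i
      by_cases hi : i ∈ E
      · rw [Finset.piecewise_eq_of_mem _ _ _ hi]
        funext j
        simp [hW₂, Finset.piecewise_eq_of_mem _ _ _ hi, hKrow, herow, hi]
        ring
      · rw [Finset.piecewise_eq_of_notMem _ _ _ hi]
        funext j
        simp [hW₂, Finset.piecewise_eq_of_notMem _ _ _ hi, hKrow, hi]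
    have fdet : ∀ (M : Matrix ι ι ℝ), f M = M.det := fun _ => rfl
    rw [← fdet, h1, f.map_piecewise_smul (fun _ => (-1:ℝ)) W₂ E]
    simp [smul_eq_mul]
  -- Step B : f W₂ = sum over powerset
  have stepB : f W₂ = ∑ B ∈ E.powerset, f (B.piecewise (-erow) Krow) := by
    rw [hW₂, show (-erow + Krow : ι → ι → ℝ) = (-erow) + Krow from rfl]
    exact f.map_piecewise_add (-erow) Krow E
  -- Step C : each term
  have stepC : ∀ B ∈ E.powerset, f (B.piecewise (-erow) Krow)
      = (-1:ℝ)^B.card * (subMat K ((Bᶜ).image e)).det := by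
    intro B _
    have h1 : B.piecewise (-erow) Krow
        = B.piecewise (fun i => (-1:ℝ) • (B.piecewise erow Krow) i) (B.piecewise erow Krow) := by
      funext i
      by_cases hi : i ∈ B
      · rw [Finset.piecewise_eq_of_mem _ _ _ hi, Finset.piecewise_eq_of_mem _ _ _ hi,
          Finset.piecewise_eq_of_mem _ _ _ hi]
        funext j; simp
      · rw [Finset.piecewise_eq_of_notMem _ _ _ hi, Finset.piecewise_eq_of_notMem _ _ _ hi,
          Finset.piecewise_eq_of_notMem _ _ _ hi]
    have h2 : f (B.piecewise erow Krow) = (subMat K ((Bᶜ).image e)).det := by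
      have hmat : (B.piecewise erow Krow : ι → ι → ℝ)
          = (Matrix.of fun i j => if i ∈ Bᶜ then K (e i) (e j) else if i = j then (1:ℝ) else 0) := by
        funext i j
        by_cases hi : i ∈ B
        · simp [Finset.piecewise_eq_of_mem _ _ _ hi, herow, hi]
        · simp [Finset.piecewise_eq_of_notMem _ _ _ hi, hKrow, hi]
      rw [show f (B.piecewise erow Krow)
          = Matrix.det (Matrix.of (B.piecewise erow Krow)) from rfl,
        show Matrix.of (B.piecewise erow Krow) = _ from hmat, det_pad K e he Bᶜ]
    rw [h1, f.map_piecewise_smul (fun _ => (-1:ℝ)) (B.piecewise erow Krow) B, h2]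
    simp [smul_eq_mul]
  have key : ∀ B ∈ E.powerset, (-1:ℝ)^E.card * ((-1:ℝ)^B.card * (subMat K ((Bᶜ).image e)).det)
      = (-1:ℝ)^(E\B).card * (subMat K ((Eᶜ ∪ (E\B)).image e)).det := by
    intro B hB
    rw [Finset.mem_powerset] at hB
    have hcompl : Bᶜ = Eᶜ ∪ (E \ B) := by
      ext x
      simp only [Finset.mem_compl, Finset.mem_union, Finset.mem_sdiff]
      have hxE := @hB x
      by_cases hx : x ∈ E <;> by_cases hxB : x ∈ B <;> simp_all
    have hcard : E.card = (E \ B).card + B.card := (Finset.card_sdiff_add_card_eq_card hB).symm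
    have h2 : (-1:ℝ)^B.card * (-1:ℝ)^B.card = 1 := by
      rw [← pow_add]; exact Even.neg_one_pow ⟨B.card, rfl⟩
    rw [hcompl, hcard, pow_add]
    linear_combination ((-1:ℝ)^(E\B).card * (subMat K (image e (Eᶜ ∪ E \ B))).det) * h2
  rw [stepA, stepB, Finset.mul_sum]
  calc ∑ B ∈ E.powerset, (-1:ℝ)^E.card * f (B.piecewise (-erow) Krow)
      = ∑ B ∈ E.powerset, (-1:ℝ)^(E\B).card * (subMat K ((Eᶜ ∪ (E\B)).image e)).det := by
        refine Finset.sum_congr rfl (fun B hB => ?_)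
        rw [stepC B hB]; exact key B hB
    _ = ∑ B ∈ E.powerset, (-1:ℝ)^B.card * (subMat K ((Eᶜ ∪ B).image e)).det := by
        refine Finset.sum_nbij' (fun B => E \ B) (fun B => E \ B) ?_ ?_ ?_ ?_ ?_
        · intro a ha; rw [Finset.mem_powerset] at *; exact Finset.sdiff_subset
        · intro a ha; rw [Finset.mem_powerset] at *; exact Finset.sdiff_subset
        · intro a ha; rw [Finset.mem_powerset] at ha; exact Finset.sdiff_sdiff_eq_self ha
        · intro a ha; rw [Finset.mem_powerset] at ha; exact Finset.sdiff_sdiff_eq_self ha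
        · intro a ha; rfl

lemma neg_one_sum {α : Type*} [DecidableEq α] (t : Finset α) :
    ∑ B ∈ t.powerset, (-1:ℝ)^B.card = if t = ∅ then 1 else 0 := by
  have h := Finset.sum_powerset_neg_one_pow_card (x := t)
  calc ∑ B ∈ t.powerset, (-1:ℝ)^B.card
      = ((∑ B ∈ t.powerset, (-1:ℤ)^B.card : ℤ) : ℝ) := by push_cast; rfl
    _ = _ := by rw [h]; split <;> simp

lemma IEgen {N : ℕ} (P : Finset (Fin N) → ℝ) (T R S : Finset (Fin N))
    (hS : S ⊆ T) (hR : Disjoint R T) :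
    ∑ C ∈ univ.filter (fun C => C ∩ T = S ∧ R ⊆ C), P C
      = ∑ B ∈ (T \ S).powerset,
          (-1:ℝ)^B.card * ∑ C ∈ univ.filter (fun C => R ∪ S ∪ B ⊆ C), P C := by
  classical
  have inner : ∀ C : Finset (Fin N),
      ∑ B ∈ (T \ S).powerset, (-1:ℝ)^B.card * (if R ∪ S ∪ B ⊆ C then P C else 0)
        = (if C ∩ T = S ∧ R ⊆ C then P C else 0) := by
    intro C
    by_cases hRS : R ⊆ C ∧ S ⊆ C
    · have h1 : ∀ B : Finset (Fin N), (R ∪ S ∪ B ⊆ C) ↔ B ⊆ C := by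
        intro B
        simp only [Finset.union_subset_iff]
        tauto
      have h2 : ∑ B ∈ (T \ S).powerset, (-1:ℝ)^B.card * (if R ∪ S ∪ B ⊆ C then P C else 0)
          = ∑ B ∈ ((T \ S) ∩ C).powerset, (-1:ℝ)^B.card * P C := by
        simp only [mul_ite, mul_zero]
        rw [← Finset.sum_filter]
        apply Finset.sum_congr
        · ext B
          simp only [Finset.mem_filter, Finset.mem_powerset, Finset.subset_inter_iff, h1]
        · intro B _; rfl
      rw [h2, ← Finset.sum_mul, neg_one_sum]
      have h3 : (C ∩ T = S ∧ R ⊆ C) ↔ ((T \ S) ∩ C = ∅) := by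
        constructor
        · rintro ⟨hCT, -⟩
          ext x
          simp only [Finset.mem_inter, Finset.mem_sdiff, Finset.notMem_empty, iff_false]
          rintro ⟨⟨hxT, hxS⟩, hxC⟩
          exact hxS (hCT ▸ Finset.mem_inter.2 ⟨hxC, hxT⟩)
        · intro hemp
          refine ⟨?_, hRS.1⟩
          ext x
          simp only [Finset.mem_inter]
          constructor
          · rintro ⟨hxC, hxT⟩
            by_contra hxS
            exact absurd (Finset.mem_inter.2 ⟨Finset.mem_sdiff.2 ⟨hxT, hxS⟩, hxC⟩)
              (by simp [hemp])
          · intro hxS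
            exact ⟨hRS.2 hxS, hS hxS⟩
      by_cases hemp : (T \ S) ∩ C = ∅
      · simp [hemp, h3.2 hemp]
      · have : ¬ (C ∩ T = S ∧ R ⊆ C) := fun h => hemp (h3.1 h)
        simp [hemp, this]
    · have h1 : ∀ B : Finset (Fin N), ¬ (R ∪ S ∪ B ⊆ C) := by
        intro B hsub
        simp only [Finset.union_subset_iff] at hsub
        exact hRS ⟨hsub.1.1, hsub.1.2⟩
      have h2 : ¬ (C ∩ T = S ∧ R ⊆ C) := by
        rintro ⟨hCT, hRC⟩
        refine hRS ⟨hRC, ?_⟩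
        rw [← hCT]
        exact Finset.inter_subset_left
      rw [if_neg h2]
      refine Finset.sum_eq_zero fun B _ => ?_
      rw [if_neg (h1 B), mul_zero]
  calc ∑ C ∈ univ.filter (fun C => C ∩ T = S ∧ R ⊆ C), P C
      = ∑ C : Finset (Fin N), (if C ∩ T = S ∧ R ⊆ C then P C else 0) := by
        rw [Finset.sum_filter]
    _ = ∑ C : Finset (Fin N), ∑ B ∈ (T \ S).powerset,
          (-1:ℝ)^B.card * (if R ∪ S ∪ B ⊆ C then P C else 0) := by
        exact Finset.sum_congr rfl (fun C _ => (inner C).symm)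
    _ = ∑ B ∈ (T \ S).powerset, ∑ C : Finset (Fin N),
          (-1:ℝ)^B.card * (if R ∪ S ∪ B ⊆ C then P C else 0) := Finset.sum_comm
    _ = ∑ B ∈ (T \ S).powerset,
          (-1:ℝ)^B.card * ∑ C ∈ univ.filter (fun C => R ∪ S ∪ B ⊆ C), P C := by
        refine Finset.sum_congr rfl (fun B _ => ?_)
        rw [Finset.sum_filter, Finset.mul_sum]

lemma dpp_swap {ι : Type*} [Fintype ι] (M : Matrix ι ι ℝ) (a b : ι → ℝ) :
    (M *ᵥ a) ⬝ᵥ b = a ⬝ᵥ (Mᵀ *ᵥ b) := by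
  rw [dotProduct_comm, Matrix.dotProduct_mulVec, ← Matrix.mulVec_transpose, dotProduct_comm]

open scoped MatrixOrder in
lemma dpp_inv_sub_one_psd {ι : Type*} [Fintype ι] [DecidableEq ι] (A : Matrix ι ι ℝ)
    (hA : A.PosSemidef) (hIA : ((1 : Matrix ι ι ℝ) - A).PosSemidef) (hdet : IsUnit A.det) :
    (A⁻¹ - 1).PosSemidef := by
  have hAt : Aᵀ = A := hA.1
  have hherm : (A⁻¹ - (1 : Matrix ι ι ℝ)).IsHermitian := (hA.1.inv).sub (Matrix.isHermitian_one)
  refine Matrix.PosSemidef.of_dotProduct_mulVec_nonneg hherm (fun x => ?_)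
  have hAA : A * A⁻¹ = 1 := Matrix.mul_nonsing_inv _ hdet
  set y := A⁻¹ *ᵥ x with hy
  have hx : A *ᵥ y = x := by rw [hy, Matrix.mulVec_mulVec, hAA, Matrix.one_mulVec]
  set R := CFC.sqrt ((1 : Matrix ι ι ℝ) - A) with hR
  have hRt : Rᵀ = R := (CFC.sqrt_nonneg ((1 : Matrix ι ι ℝ) - A)).posSemidef.1
  have hRR : R * R = (1 : Matrix ι ι ℝ) - A := CFC.sqrt_mul_sqrt_self _ hIA.nonneg
  have hRAR : R * A * R = A - A * A := by
    have hA' : A = 1 - R * R := by rw [hRR]; noncomm_ring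
    rw [hA']; noncomm_ring
  have key : x ⬝ᵥ ((A⁻¹ - 1) *ᵥ x) = (R *ᵥ y) ⬝ᵥ (A *ᵥ (R *ᵥ y)) := by
    have h1 : x ⬝ᵥ ((A⁻¹ - 1) *ᵥ x) = x ⬝ᵥ y - x ⬝ᵥ x := by
      rw [Matrix.sub_mulVec, Matrix.one_mulVec, ← hy, dotProduct_sub]
    have h2 : x ⬝ᵥ y = y ⬝ᵥ (A *ᵥ y) := by
      rw [← hx, dpp_swap, hAt, dotProduct_comm, dpp_swap, hAt]
    have h3 : x ⬝ᵥ x = y ⬝ᵥ ((A * A) *ᵥ y) := by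
      conv_lhs => rw [← hx]
      rw [dpp_swap, hAt, Matrix.mulVec_mulVec]
    have h4 : (R *ᵥ y) ⬝ᵥ (A *ᵥ (R *ᵥ y)) = y ⬝ᵥ ((R * A * R) *ᵥ y) := by
      rw [dpp_swap, hRt, Matrix.mulVec_mulVec, Matrix.mulVec_mulVec, Matrix.mul_assoc]
    rw [h1, h2, h3, h4, hRAR, Matrix.sub_mulVec, dotProduct_sub]
  have := hA.dotProduct_mulVec_nonneg (R *ᵥ y)
  simp only [star_trivial] at this ⊢
  rw [key]
  exact this

lemma dpp_core {ι : Type*} [Fintype ι] [DecidableEq ι] (A : Matrix ι ι ℝ) (d : ι → ℝ)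
    (hA : A.PosSemidef) (hIA : ((1 : Matrix ι ι ℝ) - A).PosSemidef)
    (hAdet : IsUnit A.det) (hd : ∀ i, d i = 0 ∨ d i = 1)
    (hG : IsUnit (A - Matrix.diagonal d).det) (v : ι → ℝ) :
    v ⬝ᵥ ((A - Matrix.diagonal d)⁻¹ *ᵥ v) ≤ v ⬝ᵥ (A⁻¹ *ᵥ v) := by
  have hAt : Aᵀ = A := hA.1
  set Pm := Matrix.diagonal d with hPm
  have hPt : Pmᵀ = Pm := Matrix.diagonal_transpose d
  have hPP : Pm * Pm = Pm := by
    rw [hPm, Matrix.diagonal_mul_diagonal]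
    have : (fun i => d i * d i) = d := funext fun i => by rcases hd i with h | h <;> simp [h]
    rw [this]
  have hGt : (A - Pm)ᵀ = A - Pm := by rw [Matrix.transpose_sub, hAt, hPt]
  set z := (A - Pm)⁻¹ *ᵥ v with hz
  have hv : (A - Pm) *ᵥ z = v := by
    rw [hz, Matrix.mulVec_mulVec, Matrix.mul_nonsing_inv _ hG, Matrix.one_mulVec]
  set w := Pm *ᵥ z with hw
  have hPw : Pm *ᵥ w = w := by rw [hw, Matrix.mulVec_mulVec, hPP]
  have hAinvt : (A⁻¹)ᵀ = A⁻¹ := by rw [Matrix.transpose_nonsing_inv, hAt]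
  -- v = A z - w
  have hv' : v = A *ᵥ z - w := by rw [← hv, Matrix.sub_mulVec, hw]
  -- A⁻¹ v = z - A⁻¹ w
  have h5 : A⁻¹ *ᵥ v = z - A⁻¹ *ᵥ w := by
    rw [hv', Matrix.mulVec_sub, Matrix.mulVec_mulVec, Matrix.nonsing_inv_mul _ hAdet,
      Matrix.one_mulVec]
  have hzw : z ⬝ᵥ w = w ⬝ᵥ w := by
    conv_lhs => rw [← hPw]
    rw [dotProduct_comm, dpp_swap, hPt, hw]
  have hvz : v ⬝ᵥ (A⁻¹ *ᵥ w) = z ⬝ᵥ w - (A⁻¹ *ᵥ w) ⬝ᵥ w := by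
    have : v ⬝ᵥ (A⁻¹ *ᵥ w) = (A⁻¹ *ᵥ v) ⬝ᵥ w := by
      rw [dotProduct_comm, dpp_swap, hAinvt, dotProduct_comm]
    rw [this, h5, sub_dotProduct]
  have hE1 : v ⬝ᵥ (A⁻¹ *ᵥ v) = v ⬝ᵥ z - z ⬝ᵥ w + (A⁻¹ *ᵥ w) ⬝ᵥ w := by
    rw [h5, dotProduct_sub, hvz]; ring
  have hE2 : v ⬝ᵥ ((A - Pm)⁻¹ *ᵥ v) = v ⬝ᵥ z := by rw [hz]
  have hfinal : v ⬝ᵥ (A⁻¹ *ᵥ v) - v ⬝ᵥ ((A - Pm)⁻¹ *ᵥ v)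
      = w ⬝ᵥ ((A⁻¹ - 1) *ᵥ w) := by
    rw [hE1, hE2, hzw, Matrix.sub_mulVec, Matrix.one_mulVec, dotProduct_sub]
    have : (A⁻¹ *ᵥ w) ⬝ᵥ w = w ⬝ᵥ (A⁻¹ *ᵥ w) := dotProduct_comm _ _
    rw [this]; ring
  have hpsd := (dpp_inv_sub_one_psd A hA hIA hAdet).dotProduct_mulVec_nonneg w
  simp only [star_trivial] at hpsd
  linarith [hfinal ▸ hpsd]

/-- `ℙ(Y ∩ {1,…,k−1} = S)` for a point process with distribution `P`. -/
noncomputable def histProb {N : ℕ} (P : Finset (Fin N) → ℝ) (k : Fin N)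
    (S : Finset (Fin N)) : ℝ :=
  ∑ C ∈ Finset.univ.filter (fun C => C ∩ Finset.univ.filter (fun i => i < k) = S), P C

/-- `ℙ(k ∈ Y, Y ∩ {1,…,k−1} = S)` for a point process with distribution `P`. -/
noncomputable def histProbIn {N : ℕ} (P : Finset (Fin N) → ℝ) (k : Fin N)
    (S : Finset (Fin N)) : ℝ :=
  ∑ C ∈ Finset.univ.filter
      (fun C => C ∩ Finset.univ.filter (fun i => i < k) = S ∧ k ∈ C), P C

lemma dpp_histProb_eq {N : ℕ} (K : Matrix (Fin N) (Fin N) ℝ) (P : Finset (Fin N) → ℝ)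
    (hP : ∀ A : Finset (Fin N),
      ∑ B ∈ Finset.univ.filter (fun B => A ⊆ B), P B = (subMat K A).det)
    (k : Fin N) (S : Finset (Fin N)) (hS : S ⊆ Finset.univ.filter (fun i => i < k)) :
    histProb P k S
      = (Matrix.of fun i j : {i : Fin N // i < k} =>
          if i ∈ (Finset.univ.filter (fun i : {i : Fin N // i < k} => ¬ i.1 ∈ S)) then
            ((if i = j then (1:ℝ) else 0) - K (Subtype.val i) (Subtype.val j))
          else K (Subtype.val i) (Subtype.val j)).det := by
  classical
  set T := Finset.univ.filter (fun i : Fin N => i < k) with hT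
  set E := Finset.univ.filter (fun i : {i : Fin N // i < k} => ¬ i.1 ∈ S) with hE
  have hIE := IEgen P T ∅ S hS (by simp)
  have h1 : histProb P k S
      = ∑ C ∈ Finset.univ.filter (fun C => C ∩ T = S ∧ (∅ : Finset (Fin N)) ⊆ C), P C := by
    unfold histProb
    congr 1
    apply Finset.filter_congr
    intro C _
    simp [hT]
  rw [h1, hIE]
  have h2 : ∀ B ∈ (T \ S).powerset,
      (-1:ℝ)^B.card * (∑ C ∈ Finset.univ.filter (fun C => ∅ ∪ S ∪ B ⊆ C), P C)
        = (-1:ℝ)^B.card * (subMat K (S ∪ B)).det := by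
    intro B _
    rw [show ((∅ : Finset (Fin N)) ∪ S ∪ B) = S ∪ B by rw [Finset.empty_union], hP (S ∪ B)]
  rw [Finset.sum_congr rfl h2, det_expand K Subtype.val Subtype.val_injective E]
  have hEc : Finset.image Subtype.val Eᶜ = S := by
    ext x
    simp only [Finset.mem_image, hE, Finset.compl_filter, Finset.mem_filter, Finset.mem_univ,
      true_and, not_not]
    constructor
    · rintro ⟨a, ha, rfl⟩; exact ha
    · intro hx
      have hxk : x < k := by have := hS hx; rw [hT] at this; simpa using this
      exact ⟨⟨x, hxk⟩, hx, rfl⟩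
  refine Finset.sum_nbij' (i := fun B => Finset.univ.filter (fun i : {i : Fin N // i < k} => i.1 ∈ B))
    (j := fun B' => B'.image Subtype.val) ?_ ?_ ?_ ?_ ?_
  · intro B hB
    rw [Finset.mem_powerset] at hB ⊢
    intro i hi
    rw [Finset.mem_filter] at hi
    rw [hE, Finset.mem_filter]
    refine ⟨Finset.mem_univ _, ?_⟩
    have := hB hi.2
    rw [Finset.mem_sdiff] at this
    exact this.2
  · intro B' hB'
    rw [Finset.mem_powerset] at hB' ⊢
    intro x hx
    rw [Finset.mem_image] at hx
    obtain ⟨a, ha, rfl⟩ := hx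
    have := hB' ha
    rw [hE, Finset.mem_filter] at this
    rw [Finset.mem_sdiff, hT]
    exact ⟨by simpa using a.2, this.2⟩
  · intro B hB
    rw [Finset.mem_powerset] at hB
    ext x
    simp only [Finset.mem_image, Finset.mem_filter, Finset.mem_univ, true_and]
    constructor
    · rintro ⟨a, ha, rfl⟩; exact ha
    · intro hx
      have hxk : x < k := by have := hB hx; rw [Finset.mem_sdiff, hT] at this; simpa using this.1
      exact ⟨⟨x, hxk⟩, hx, rfl⟩
  · intro B' hB'
    ext i
    simp only [Finset.mem_filter, Finset.mem_univ, true_and, Finset.mem_image]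
    constructor
    · rintro ⟨a, ha, hai⟩
      rwa [show a = i from Subtype.ext hai] at ha
    · intro hi; exact ⟨i, hi, rfl⟩
  · intro B hB
    rw [Finset.mem_powerset] at hB
    beta_reduce
    have himg : Finset.image Subtype.val
        (Finset.univ.filter (fun i : {i : Fin N // i < k} => i.1 ∈ B)) = B := by
      ext x
      simp only [Finset.mem_image, Finset.mem_filter, Finset.mem_univ, true_and]
      constructor
      · rintro ⟨a, ha, rfl⟩; exact ha
      · intro hx
        have hxk : x < k := by have := hB hx; rw [Finset.mem_sdiff, hT] at this; simpa using this.1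
        exact ⟨⟨x, hxk⟩, hx, rfl⟩
    have hcard : B.card
        = (Finset.univ.filter (fun i : {i : Fin N // i < k} => i.1 ∈ B)).card := by
      conv_lhs => rw [← himg]
      rw [Finset.card_image_of_injective _ Subtype.val_injective]
    rw [Finset.image_union, hEc, himg, hcard]


lemma dpp_histProbIn_eq {N : ℕ} (K : Matrix (Fin N) (Fin N) ℝ) (P : Finset (Fin N) → ℝ)
    (hP : ∀ A : Finset (Fin N),
      ∑ B ∈ Finset.univ.filter (fun B => A ⊆ B), P B = (subMat K A).det)
    (k : Fin N) (S : Finset (Fin N)) (hS : S ⊆ Finset.univ.filter (fun i => i < k)) :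
    histProbIn P k S
      = (Matrix.of fun x y : ({i : Fin N // i < k} ⊕ Unit) =>
          if x ∈ (Finset.univ.filter
              (fun i : {i : Fin N // i < k} => ¬ i.1 ∈ S)).image Sum.inl then
            ((if x = y then (1:ℝ) else 0)
              - K (Sum.elim Subtype.val (fun _ => k) x) (Sum.elim Subtype.val (fun _ => k) y))
          else K (Sum.elim Subtype.val (fun _ => k) x)
            (Sum.elim Subtype.val (fun _ => k) y)).det := by
  classical
  set T := Finset.univ.filter (fun i : Fin N => i < k) with hT
  set E := Finset.univ.filter (fun i : {i : Fin N // i < k} => ¬ i.1 ∈ S) with hE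
  set e2 : ({i : Fin N // i < k} ⊕ Unit) → Fin N := Sum.elim Subtype.val (fun _ => k) with he2def
  have he2 : Function.Injective e2 := by
    rintro (a | a) (b | b) hab
    · exact congrArg Sum.inl (Subtype.ext hab)
    · exact absurd hab (ne_of_lt a.2)
    · exact absurd hab.symm (ne_of_lt b.2)
    · rfl
  set E2 : Finset ({i : Fin N // i < k} ⊕ Unit) := E.image Sum.inl with hE2def
  have hkT : k ∉ T := by rw [hT]; simp
  have hIE := IEgen P T {k} S hS (Finset.disjoint_singleton_left.2 hkT)
  have h1 : histProbIn P k S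
      = ∑ C ∈ Finset.univ.filter (fun C => C ∩ T = S ∧ ({k} : Finset (Fin N)) ⊆ C), P C := by
    unfold histProbIn
    congr 1
    apply Finset.filter_congr
    intro C _
    simp [Finset.singleton_subset_iff, hT]
  rw [h1, hIE]
  have h2 : ∀ B ∈ (T \ S).powerset,
      (-1:ℝ)^B.card * (∑ C ∈ Finset.univ.filter (fun C => {k} ∪ S ∪ B ⊆ C), P C)
        = (-1:ℝ)^B.card * (subMat K ({k} ∪ S ∪ B)).det := by
    intro B _
    rw [hP ({k} ∪ S ∪ B)]
  rw [Finset.sum_congr rfl h2, det_expand K e2 he2 E2]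
  have hmemE2 : ∀ i : {i : Fin N // i < k}, Sum.inl i ∈ E2 ↔ ¬ i.1 ∈ S := by
    intro i
    rw [hE2def, Finset.mem_image]
    constructor
    · rintro ⟨a, ha, hai⟩
      rw [← show a = i from Sum.inl.injEq a i ▸ hai]
      rw [hE, Finset.mem_filter] at ha
      exact ha.2
    · intro hi
      exact ⟨i, by rw [hE, Finset.mem_filter]; exact ⟨Finset.mem_univ _, hi⟩, rfl⟩
  have hinrE2 : (Sum.inr () : {i : Fin N // i < k} ⊕ Unit) ∉ E2 := by
    rw [hE2def, Finset.mem_image]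
    rintro ⟨a, -, h⟩
    exact Sum.inl_ne_inr h
  have hEc2 : Finset.image e2 E2ᶜ = {k} ∪ S := by
    ext x
    rw [Finset.mem_image]
    constructor
    · rintro ⟨a, ha, rfl⟩
      rw [Finset.mem_compl] at ha
      rcases a with i | u
      · rw [hmemE2 i, not_not] at ha
        exact Finset.mem_union_right _ ha
      · exact Finset.mem_union_left _ (Finset.mem_singleton_self k)
    · intro hx
      rcases Finset.mem_union.1 hx with hx | hx
      · rw [Finset.mem_singleton] at hx
        subst hx
        exact ⟨Sum.inr (), by rw [Finset.mem_compl]; exact hinrE2, rfl⟩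
      · have hxk : x < k := by have := hS hx; rw [hT] at this; simpa using this
        refine ⟨Sum.inl ⟨x, hxk⟩, ?_, rfl⟩
        rw [Finset.mem_compl, hmemE2]
        simpa using hx
  refine Finset.sum_nbij'
    (i := fun B => (Finset.univ.filter
      (fun i : {i : Fin N // i < k} => i.1 ∈ B)).image Sum.inl)
    (j := fun B' => B'.image e2) ?_ ?_ ?_ ?_ ?_
  · intro B hB
    rw [Finset.mem_powerset] at hB ⊢
    intro x hx
    rw [Finset.mem_image] at hx
    obtain ⟨a, ha, rfl⟩ := hx
    rw [Finset.mem_filter] at ha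
    rw [hmemE2]
    have := hB ha.2
    rw [Finset.mem_sdiff] at this
    exact this.2
  · intro B' hB'
    rw [Finset.mem_powerset] at hB' ⊢
    intro x hx
    rw [Finset.mem_image] at hx
    obtain ⟨a, ha, rfl⟩ := hx
    have haE2 := hB' ha
    rcases a with i | u
    · rw [hmemE2] at haE2
      rw [Finset.mem_sdiff, hT]
      exact ⟨by simpa [he2def] using i.2, haE2⟩
    · exact absurd haE2 hinrE2
  · intro B hB
    rw [Finset.mem_powerset] at hB
    beta_reduce
    rw [Finset.image_image]
    ext x
    simp only [Finset.mem_image, Finset.mem_filter, Finset.mem_univ, true_and,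
      Function.comp_apply]
    constructor
    · rintro ⟨a, ha, rfl⟩; exact ha
    · intro hx
      have hxk : x < k := by have := hB hx; rw [Finset.mem_sdiff, hT] at this; simpa using this.1
      exact ⟨⟨x, hxk⟩, hx, rfl⟩
  · intro B' hB'
    rw [Finset.mem_powerset] at hB'
    beta_reduce
    ext x
    rw [Finset.mem_image]
    constructor
    · rintro ⟨a, ha, rfl⟩
      rw [Finset.mem_filter] at ha
      rcases Finset.mem_image.1 ha.2 with ⟨b, hb, hba⟩
      rcases b with i | u
      · have heq := he2 (a₁ := Sum.inl i) (a₂ := Sum.inl a) hba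
        rwa [← heq]
      · have := hB' hb
        exact absurd this hinrE2
    · intro hx
      have hxE2 := hB' hx
      rcases x with i | u
      · refine ⟨i, ?_, rfl⟩
        rw [Finset.mem_filter]
        exact ⟨Finset.mem_univ _, Finset.mem_image.2 ⟨Sum.inl i, hx, rfl⟩⟩
      · exact absurd hxE2 hinrE2
  · intro B hB
    rw [Finset.mem_powerset] at hB
    beta_reduce
    have himg : Finset.image e2 ((Finset.univ.filter
        (fun i : {i : Fin N // i < k} => i.1 ∈ B)).image Sum.inl) = B := by
      rw [Finset.image_image]
      ext x
      simp only [Finset.mem_image, Finset.mem_filter, Finset.mem_univ, true_and,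
        Function.comp_apply]
      constructor
      · rintro ⟨a, ha, rfl⟩; exact ha
      · intro hx
        have hxk : x < k := by
          have := hB hx; rw [Finset.mem_sdiff, hT] at this; simpa using this.1
        exact ⟨⟨x, hxk⟩, hx, rfl⟩
    have hcard : B.card = ((Finset.univ.filter
        (fun i : {i : Fin N // i < k} => i.1 ∈ B)).image
          (Sum.inl : {i : Fin N // i < k} → ({i : Fin N // i < k} ⊕ Unit))).card := by
      conv_lhs => rw [← himg]
      rw [Finset.card_image_of_injective _ he2]
    rw [Finset.image_union, hEc2, himg, hcard]

noncomputable def dppA {N : ℕ} (K : Matrix (Fin N) (Fin N) ℝ) (k : Fin N) :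
    Matrix {i : Fin N // i < k} {i : Fin N // i < k} ℝ :=
  ((1 : Matrix (Fin N) (Fin N) ℝ) - K).submatrix
    (fun a : {i : Fin N // i < k} => a.1) (fun a : {i : Fin N // i < k} => a.1)

noncomputable def dppPm {N : ℕ} (k : Fin N) (S : Finset (Fin N)) :
    Matrix {i : Fin N // i < k} {i : Fin N // i < k} ℝ :=
  Matrix.diagonal (fun i => if i.1 ∈ S then (1:ℝ) else 0)

lemma dpp_scaleW {N : ℕ} (K : Matrix (Fin N) (Fin N) ℝ) (k : Fin N) (S : Finset (Fin N)) :
    (dppPm k S - dppA K k).det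
      = (∏ i : {i : Fin N // i < k}, (if i.1 ∈ S then (1:ℝ) else -1)) *
        (Matrix.of fun i j : {i : Fin N // i < k} =>
          if i ∈ (Finset.univ.filter (fun i : {i : Fin N // i < k} => ¬ i.1 ∈ S)) then
            ((if i = j then (1:ℝ) else 0) - K (Subtype.val i) (Subtype.val j))
          else K (Subtype.val i) (Subtype.val j)).det := by
  classical
  rw [← Matrix.det_mul_column]
  congr 1
  ext i j
  by_cases hij : i = j
  · subst hij
    by_cases his : i.1 ∈ S <;>
      simp [dppPm, dppA, Matrix.one_apply, his] <;> ring
  · have hne : ¬ ((i : Fin N) = (j : Fin N)) := fun h => hij (Subtype.ext h)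
    by_cases his : i.1 ∈ S <;>
      simp [dppPm, dppA, Matrix.diagonal_apply, Matrix.one_apply, his, hij, hne] <;> ring

lemma dpp_scaleN {N : ℕ} (K : Matrix (Fin N) (Fin N) ℝ) (k : Fin N) (S : Finset (Fin N)) :
    (Matrix.fromBlocks (dppPm k S - dppA K k)
        (Matrix.of fun (i : {i : Fin N // i < k}) (_ : Unit) => K i.1 k)
        (Matrix.of fun (_ : Unit) (j : {i : Fin N // i < k}) => K k j.1)
        (Matrix.of fun (_ : Unit) (_ : Unit) => K k k)).det
      = (∏ i : {i : Fin N // i < k}, (if i.1 ∈ S then (1:ℝ) else -1)) *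
        (Matrix.of fun x y : ({i : Fin N // i < k} ⊕ Unit) =>
          if x ∈ (Finset.univ.filter
              (fun i : {i : Fin N // i < k} => ¬ i.1 ∈ S)).image Sum.inl then
            ((if x = y then (1:ℝ) else 0)
              - K (Sum.elim Subtype.val (fun _ => k) x) (Sum.elim Subtype.val (fun _ => k) y))
          else K (Sum.elim Subtype.val (fun _ => k) x)
            (Sum.elim Subtype.val (fun _ => k) y)).det := by
  classical
  have hprod : (∏ x : ({i : Fin N // i < k} ⊕ Unit), Sum.elim (fun i : {i : Fin N // i < k} =>
      (if i.1 ∈ S then (1:ℝ) else -1)) (fun _ => 1) x)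
        = ∏ i : {i : Fin N // i < k}, (if i.1 ∈ S then (1:ℝ) else -1) := by
    rw [Fintype.prod_sum_type]
    simp
  rw [← hprod, ← Matrix.det_mul_column (Sum.elim (fun i : {i : Fin N // i < k} =>
    (if i.1 ∈ S then (1:ℝ) else -1)) (fun _ => 1))]
  congr 1
  ext x y
  have hcond : ∀ i : {i : Fin N // i < k},
      (∃ a, a ∉ S ∧ ∃ (h : a < k), (⟨a, h⟩ : {i : Fin N // i < k}) = i) ↔ ¬ i.1 ∈ S := by
    intro i
    constructor
    · rintro ⟨a, ha, hk, rfl⟩; exact ha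
    · intro h; exact ⟨i.1, h, i.2, rfl⟩
  rcases x with i | u
  · rcases y with j | u'
    · by_cases hij : i = j
      · subst hij
        by_cases his : i.1 ∈ S <;>
          simp [dppPm, dppA, Matrix.one_apply, his, hcond] <;> ring
      · have hne : ¬ ((i : Fin N) = (j : Fin N)) := fun h => hij (Subtype.ext h)
        by_cases his : i.1 ∈ S <;>
          simp [dppPm, dppA, Matrix.diagonal_apply, Matrix.one_apply, his, hij, hne, hcond] <;>
            ring
    · by_cases his : i.1 ∈ S <;> simp [his, hcond] <;> ring
  · rcases y with j | u'
    · simp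
    · simp

lemma dpp_schur {ι : Type*} [Fintype ι] [DecidableEq ι] (M : Matrix ι ι ℝ) (u w : ι → ℝ)
    (d : ℝ) (hM : IsUnit M.det) :
    (Matrix.fromBlocks M (Matrix.of fun i (_ : Unit) => w i)
        (Matrix.of fun (_ : Unit) j => u j) (Matrix.of fun (_ : Unit) (_ : Unit) => d)).det
      = M.det * (d - ∑ i, ∑ j, u i * M⁻¹ i j * w j) := by
  have : Invertible M := M.invertibleOfIsUnitDet hM
  rw [Matrix.det_fromBlocks₁₁]
  congr 1
  rw [Matrix.det_unique]
  have hinv : ⅟M = M⁻¹ := Matrix.invOf_eq_nonsing_inv M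
  simp only [Matrix.sub_apply, Matrix.of_apply, hinv]
  congr 1
  calc (Matrix.of (fun (_ : Unit) j => u j) * M⁻¹ *
        Matrix.of (fun i (_ : Unit) => w i)) () ()
      = ∑ j, (∑ i, u i * M⁻¹ i j) * w j := by
        simp only [Matrix.mul_apply, Matrix.of_apply]
    _ = ∑ j, ∑ i, u i * M⁻¹ i j * w j := by
        refine Finset.sum_congr rfl fun j _ => ?_
        rw [Finset.sum_mul]
    _ = ∑ i, ∑ j, u i * M⁻¹ i j * w j := Finset.sum_comm

/-- If `ℙ(Y ∩ {1,…,k−1} = ∅) > 0`, the maximum of `ℙ(Y_k = 1 | Y_{1:k−1} = y_{1:k−1})`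
over admissible histories is attained at the empty history and equals
`K(k,k) + K_{{k}×{1:k−1}} ((I−K)_{{1:k−1}})⁻¹ K_{{1:k−1}×{k}}`. -/
theorem dpp_optimal_bernoulli_probability {N : ℕ} (K : Matrix (Fin N) (Fin N) ℝ)
    (hK : K.PosSemidef) (hIK : ((1 : Matrix (Fin N) (Fin N) ℝ) - K).PosSemidef)
    (P : Finset (Fin N) → ℝ) (hPnn : ∀ C, 0 ≤ P C)
    (hP : ∀ A : Finset (Fin N),
      ∑ B ∈ Finset.univ.filter (fun B => A ⊆ B), P B = (subMat K A).det)
    (k : Fin N) (h0 : 0 < histProb P k ∅) :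
    (∀ S : Finset (Fin N), S ⊆ Finset.univ.filter (fun i => i < k) →
        0 < histProb P k S →
        histProbIn P k S / histProb P k S ≤ histProbIn P k ∅ / histProb P k ∅) ∧
    histProbIn P k ∅ / histProb P k ∅ =
      K k k + ∑ i : {i : Fin N // i < k}, ∑ j : {j : Fin N // j < k},
        K k i.1 *
          ((((1 : Matrix (Fin N) (Fin N) ℝ) - K).submatrix
              (fun a : {i : Fin N // i < k} => a.1)
              (fun a : {j : Fin N // j < k} => a.1))⁻¹ i j) *
          K j.1 k := by

  classical
  have hKsym : ∀ a b, K b a = K a b := fun a b => by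
    have := hK.1.apply a b
    simpa using this
  -- abbreviations
  have hc2 : ∀ S : Finset (Fin N),
      (∏ i : {i : Fin N // i < k}, (if i.1 ∈ S then (1:ℝ) else -1))
        * (∏ i : {i : Fin N // i < k}, (if i.1 ∈ S then (1:ℝ) else -1)) = 1 := by
    intro S
    rw [← Finset.prod_mul_distrib]
    apply Finset.prod_eq_one
    intro i _
    by_cases h : i.1 ∈ S <;> simp [h]
  have hc0 : ∀ S : Finset (Fin N),
      (∏ i : {i : Fin N // i < k}, (if i.1 ∈ S then (1:ℝ) else -1)) ≠ 0 := by
    intro S h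
    have := hc2 S
    rw [h, zero_mul] at this
    exact zero_ne_one this
  have hProb : ∀ S, S ⊆ Finset.univ.filter (fun i => i < k) →
      histProb P k S = (∏ i : {i : Fin N // i < k}, (if i.1 ∈ S then (1:ℝ) else -1))
        * (dppPm k S - dppA K k).det := by
    intro S hS
    rw [dpp_histProb_eq K P hP k S hS, dpp_scaleW K k S, ← mul_assoc, hc2 S, one_mul]
  have hProbIn : ∀ S, S ⊆ Finset.univ.filter (fun i => i < k) →
      histProbIn P k S = (∏ i : {i : Fin N // i < k}, (if i.1 ∈ S then (1:ℝ) else -1))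
        * (Matrix.fromBlocks (dppPm k S - dppA K k)
            (Matrix.of fun (i : {i : Fin N // i < k}) (_ : Unit) => K i.1 k)
            (Matrix.of fun (_ : Unit) (j : {i : Fin N // i < k}) => K k j.1)
            (Matrix.of fun (_ : Unit) (_ : Unit) => K k k)).det := by
    intro S hS
    rw [dpp_histProbIn_eq K P hP k S hS, dpp_scaleN K k S, ← mul_assoc, hc2 S, one_mul]
  have hSempty : (∅ : Finset (Fin N)) ⊆ Finset.univ.filter (fun i => i < k) :=
    Finset.empty_subset _
  have hPmempty : dppPm k (∅ : Finset (Fin N)) = 0 := by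
    unfold dppPm
    simp
  have hcempty : (∏ i : {i : Fin N // i < k}, (if i.1 ∈ (∅ : Finset (Fin N)) then (1:ℝ) else -1))
      = (-1 : ℝ)^(Fintype.card {i : Fin N // i < k}) := by
    simp [Finset.prod_const, Finset.card_univ]
  have hdetA : (dppA K k).det = histProb P k ∅ := by
    have h := hProb ∅ hSempty
    rw [hPmempty, zero_sub, Matrix.det_neg, hcempty, ← mul_assoc, ← pow_add,
      Even.neg_one_pow ⟨Fintype.card {i : Fin N // i < k}, rfl⟩, one_mul] at h
    exact h.symm
  have hdetA_pos : 0 < (dppA K k).det := hdetA ▸ h0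
  have hdetA_unit : IsUnit (dppA K k).det := isUnit_iff_ne_zero.2 (ne_of_gt hdetA_pos)
  have hApsd : (dppA K k).PosSemidef := hIK.submatrix _
  have hIApsd : ((1 : Matrix {i : Fin N // i < k} {i : Fin N // i < k} ℝ) - dppA K k).PosSemidef := by
    have heq : (1 : Matrix {i : Fin N // i < k} {i : Fin N // i < k} ℝ) - dppA K k
        = K.submatrix (fun a : {i : Fin N // i < k} => a.1) (fun a : {i : Fin N // i < k} => a.1) := by
      ext i j
      by_cases hij : i = j
      · subst hij; simp [dppA, Matrix.one_apply]
      · have hne : ¬ ((i : Fin N) = (j : Fin N)) := fun h => hij (Subtype.ext h)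
        simp [dppA, Matrix.one_apply, hij, hne]
    rw [heq]
    exact hK.submatrix _
  have hratio : ∀ S, S ⊆ Finset.univ.filter (fun i => i < k) → 0 < histProb P k S →
      (dppPm k S - dppA K k).det ≠ 0 ∧
      histProbIn P k S / histProb P k S
        = K k k - ∑ i : {i : Fin N // i < k}, ∑ j : {i : Fin N // i < k},
            K k i.1 * ((dppPm k S - dppA K k)⁻¹ i j) * K j.1 k := by
    intro S hS hpos
    have hM : (dppPm k S - dppA K k).det ≠ 0 := by
      intro h
      rw [hProb S hS, h, mul_zero] at hpos
      exact lt_irrefl 0 hpos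
    refine ⟨hM, ?_⟩
    rw [hProb S hS, hProbIn S hS, mul_div_mul_left _ _ (hc0 S),
      dpp_schur _ _ _ _ (isUnit_iff_ne_zero.2 hM), mul_div_cancel_left₀ _ hM]
  have hpart2 : histProbIn P k ∅ / histProb P k ∅
      = K k k + ∑ i : {i : Fin N // i < k}, ∑ j : {i : Fin N // i < k},
          K k i.1 * ((dppA K k)⁻¹ i j) * K j.1 k := by
    have h := (hratio ∅ hSempty h0).2
    rw [hPmempty, zero_sub] at h
    have hinv : (-(dppA K k))⁻¹ = -(dppA K k)⁻¹ :=
      Matrix.inv_eq_right_inv (by rw [neg_mul_neg, Matrix.mul_nonsing_inv _ hdetA_unit])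
    rw [hinv] at h
    rw [h, sub_eq_add_neg]
    congr 1
    rw [← Finset.sum_neg_distrib]
    refine Finset.sum_congr rfl fun i _ => ?_
    rw [← Finset.sum_neg_distrib]
    refine Finset.sum_congr rfl fun j _ => ?_
    simp only [Matrix.neg_apply]
    ring
  refine ⟨?_, hpart2⟩
  -- part 1
  intro S hS hpos
  rw [(hratio S hS hpos).2, hpart2]
  have hform : ∀ M : Matrix {i : Fin N // i < k} {i : Fin N // i < k} ℝ,
      (∑ i : {i : Fin N // i < k}, ∑ j : {i : Fin N // i < k},
          K k i.1 * M i j * K j.1 k)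
        = (fun i : {i : Fin N // i < k} => K i.1 k) ⬝ᵥ
            (M *ᵥ (fun i : {i : Fin N // i < k} => K i.1 k)) := by
    intro M
    simp only [dotProduct, Matrix.mulVec]
    refine Finset.sum_congr rfl fun i _ => ?_
    rw [Finset.mul_sum]
    refine Finset.sum_congr rfl fun j _ => ?_
    rw [hKsym k i.1]
    ring
  rw [hform, hform]
  have hG : dppPm k S - dppA K k = -(dppA K k - dppPm k S) := by rw [neg_sub]
  have hdetG : (dppA K k - dppPm k S).det ≠ 0 := by
    intro h
    apply (hratio S hS hpos).1
    rw [hG, Matrix.det_neg, h, mul_zero]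
  have hinvG : (dppPm k S - dppA K k)⁻¹ = -(dppA K k - dppPm k S)⁻¹ := by
    rw [hG]
    exact Matrix.inv_eq_right_inv
      (by rw [neg_mul_neg, Matrix.mul_nonsing_inv _ (isUnit_iff_ne_zero.2 hdetG)])
  rw [hinvG, Matrix.neg_mulVec, dotProduct_neg, sub_neg_eq_add]
  have hcore := dpp_core (dppA K k) (fun i : {i : Fin N // i < k} => if i.1 ∈ S then (1:ℝ) else 0)
    hApsd hIApsd hdetA_unit (fun i => by by_cases h : i.1 ∈ S <;> simp [h])
    (isUnit_iff_ne_zero.2 hdetG) (fun i : {i : Fin N // i < k} => K i.1 k)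
  have hPmdef : dppPm k S
      = Matrix.diagonal (fun i : {i : Fin N // i < k} => if i.1 ∈ S then (1:ℝ) else 0) := rfl
  rw [← hPmdef] at hcore
  linarith [hcore]
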